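/- Let Q be an acyclic quiver that is not of Dynkin type (ADE). Then gldim σ ≥ 1 for every stability condition σ on D^b(kQ); combined with the existence of a stability condition with gldim ≤ 1, the minimum of gldim on Stab D^b(kQ) equals 1. -/

import Mathlib

set_option linter.unusedSectionVars false
set_option maxHeartbeats 1000000


open CategoryTheory CategoryTheory.Limits CategoryTheory.Pretriangulated

universe v u

variable (C : Type u) [Category.{v} C] [Preadditive C] [HasZeroObject C]
  [HasShift C ℤ] [∀ n : ℤ, (shiftFunctor C n).Additive] [Pretriangulated C]
  [HasFiniteBiproducts C]

/-- A Bridgeland stability condition, encoded by a central charge on objects and a slicing. -/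
structure StabilityCondition where
  Z : C → ℂ
  P : ℝ → Set C
  mem_of_iso : ∀ {φ : ℝ} {E F : C}, (E ≅ F) → E ∈ P φ → F ∈ P φ
  charge : ∀ {φ : ℝ} {E : C}, E ∈ P φ → ¬ IsZero E →
    ∃ m : ℝ, 0 < m ∧ Z E = (m : ℂ) * Complex.exp (Real.pi * φ * Complex.I)
  shift_mem : ∀ (φ : ℝ) (E : C), E ∈ P φ ↔ E⟦(1 : ℤ)⟧ ∈ P (φ + 1)
  sum_mem : ∀ {φ : ℝ} {X Y : C}, X ∈ P φ → Y ∈ P φ → (X ⊞ Y) ∈ P φ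
  summand_mem : ∀ {φ : ℝ} {X Y : C}, (X ⊞ Y) ∈ P φ → X ∈ P φ
  hom_zero : ∀ {φ₁ φ₂ : ℝ}, φ₂ < φ₁ → ∀ {E F : C}, E ∈ P φ₁ → F ∈ P φ₂ →
    ∀ f : E ⟶ F, f = 0
  HN : ∀ E : C, ¬ IsZero E → ∃ (n : ℕ) (obj : Fin (n + 1) → C) (φ : Fin n → ℝ),
    IsZero (obj 0) ∧ Nonempty (obj (Fin.last n) ≅ E) ∧ StrictAnti φ ∧
    ∀ i : Fin n, ∃ (A : C) (f : obj i.castSucc ⟶ obj i.succ) (g : obj i.succ ⟶ A)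
      (h : A ⟶ (obj i.castSucc)⟦(1 : ℤ)⟧),
      (Triangle.mk f g h ∈ distTriang C) ∧ A ∈ P (φ i) ∧ ¬ IsZero A

variable {C}

/-- `E` is semistable iff it lies in some slice. -/
def StabilityCondition.IsSemistable (σ : StabilityCondition C) (E : C) : Prop :=
  ∃ φ : ℝ, E ∈ σ.P φ

/-- The global dimension of a stability condition. -/
noncomputable def StabilityCondition.gldim (σ : StabilityCondition C) : EReal :=
  sSup {d : EReal | ∃ (φ₁ φ₂ : ℝ) (E F : C) (f : E ⟶ F),
    E ∈ σ.P φ₁ ∧ F ∈ σ.P φ₂ ∧ f ≠ 0 ∧ d = ((φ₂ - φ₁ : ℝ) : EReal)}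

/-- An object is indecomposable if it is nonzero and any biproduct decomposition is trivial. -/
def IsIndec (E : C) : Prop :=
  ¬ IsZero E ∧ ∀ (X Y : C), (E ≅ X ⊞ Y) → IsZero X ∨ IsZero Y

/-- `E` is stable of phase `φ`: it is a nonzero object of `P(φ)` admitting no nontrivial
extension decomposition inside `P(φ)` (i.e. it is simple in the abelian category `P(φ)`). -/
def StabilityCondition.IsStableOfPhase (σ : StabilityCondition C) (E : C) (φ : ℝ) : Prop :=
  E ∈ σ.P φ ∧ ¬ IsZero E ∧ ∀ (A B : C) (f : A ⟶ E) (g : E ⟶ B) (h : B ⟶ A⟦(1 : ℤ)⟧),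
    (Triangle.mk f g h ∈ distTriang C) → A ∈ σ.P φ → B ∈ σ.P φ →
    ¬ IsZero A → ¬ IsZero B → False

/-- The Krull–Schmidt property: every nonzero object is a finite biproduct of indecomposables. -/
def KrullSchmidt : Prop :=
  ∀ X : C, ¬ IsZero X → ∃ (m : ℕ) (f : Fin m → C),
    (∀ i, IsIndec (f i)) ∧ Nonempty (X ≅ ⨁ f)

/-- `E` admits a finite filtration (tower of exact triangles) with factors in `X`. -/
def FiltrationBy (X : Set C) (E : C) : Prop :=
  ∃ (n : ℕ) (obj : Fin (n + 1) → C), IsZero (obj 0) ∧ Nonempty (obj (Fin.last n) ≅ E) ∧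
    ∀ i : Fin n, ∃ (A : C) (f : obj i.castSucc ⟶ obj i.succ) (g : obj i.succ ⟶ A)
      (w : A ⟶ (obj i.castSucc)⟦(1 : ℤ)⟧),
      (Triangle.mk f g w ∈ distTriang C) ∧ A ∈ X

/-- The data of a bounded heart in a triangulated category: a class of objects closed
under isomorphisms, biproducts and summands, with no negative self-extensions, not
meeting its own nonzero shifts, and filtering every object by its shifts with strictly
decreasing shift degrees. -/
structure IsBoundedHeart (H : Set C) : Prop where
  mem_of_iso : ∀ {A B : C}, (A ≅ B) → A ∈ H → B ∈ H
  sum_mem : ∀ {A B : C}, A ∈ H → B ∈ H → (A ⊞ B) ∈ H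
  summand_mem : ∀ {A B : C}, (A ⊞ B) ∈ H → A ∈ H
  neg_ext : ∀ A ∈ H, ∀ B ∈ H, ∀ k : ℤ, k < 0 → ∀ f : A ⟶ B⟦k⟧, f = 0
  disjoint_shift : ∀ A ∈ H, ∀ B ∈ H, ∀ k : ℤ, k ≠ 0 → (A ≅ B⟦k⟧) → IsZero A
  bounded : ∀ E : C, ¬ IsZero E → ∃ (n : ℕ) (obj : Fin (n + 1) → C) (m : Fin n → ℤ),
    IsZero (obj 0) ∧ Nonempty (obj (Fin.last n) ≅ E) ∧ StrictAnti m ∧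
    ∀ i : Fin n, ∃ (A : C) (f : obj i.castSucc ⟶ obj i.succ) (g : obj i.succ ⟶ A)
      (w : A ⟶ (obj i.castSucc)⟦(1 : ℤ)⟧),
      (Triangle.mk f g w ∈ distTriang C) ∧ (∃ B ∈ H, Nonempty (A ≅ B⟦m i⟧))

/-- A heart is hereditary if `Hom(H, H[k]) = 0` for all `k ≥ 2`. -/
def IsHereditary (H : Set C) : Prop :=
  ∀ A ∈ H, ∀ B ∈ H, ∀ k : ℤ, 2 ≤ k → ∀ f : A ⟶ B⟦k⟧, f = 0

/-- The heart has finitely many simples: there are finitely many objects `S i ∈ H` such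
that every nonzero object of `H` is filtered (inside `H`) by copies of the `S i`. -/
def HasFinitelyManySimples (H : Set C) : Prop :=
  ∃ (m : ℕ) (S : Fin m → C), (∀ i, S i ∈ H) ∧
    ∀ A ∈ H, ¬ IsZero A → FiltrationBy {X | ∃ i, Nonempty (X ≅ S i)} A

/-- For an acyclic non-Dynkin quiver `Q`, `D^b(kQ)` has a finite hereditary heart and an
indecomposable object with nontrivial self-extension; consequently every stability
condition `σ` satisfies `gldim σ ≥ 1`, and the minimum of `gldim` equals `1`. -/
lemma isZero_shift_iff (X : C) (n : ℤ) : IsZero ((shiftFunctor C n).obj X) ↔ IsZero X := by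
  constructor
  · intro h
    rw [IsZero.iff_id_eq_zero] at h ⊢
    apply (shiftFunctor C n).map_injective
    rw [CategoryTheory.Functor.map_id, Functor.map_zero, h]
  · intro h
    rw [IsZero.iff_id_eq_zero] at h ⊢
    have h2 := (shiftFunctor C n).congr_map h
    rw [CategoryTheory.Functor.map_id, Functor.map_zero] at h2
    exact h2

noncomputable def biprodIsoOfIsZeroLeft {X Y : C} (h : IsZero X) : X ⊞ Y ≅ Y where
  hom := biprod.snd
  inv := biprod.inr
  hom_inv_id := by
    have h1 : (biprod.fst : X ⊞ Y ⟶ X) = 0 := h.eq_of_tgt _ _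
    rw [← biprod.total, h1, zero_comp, zero_add]
  inv_hom_id := by simp

noncomputable def biprodIsoOfIsZeroRight {X Y : C} (h : IsZero Y) : X ⊞ Y ≅ X where
  hom := biprod.fst
  inv := biprod.inl
  hom_inv_id := by
    have h1 : (biprod.snd : X ⊞ Y ⟶ Y) = 0 := h.eq_of_tgt _ _
    rw [← biprod.total, h1, zero_comp, add_zero]
  inv_hom_id := by simp

noncomputable def shiftShiftIso (X : C) (a b c : ℤ) (h : a + b = c) :
    (shiftFunctor C b).obj ((shiftFunctor C a).obj X) ≅ (shiftFunctor C c).obj X :=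
  ((shiftFunctorAdd' C a b c h).app X).symm

noncomputable def shiftCancelIso {X Y : C} (a b : ℤ)
    (e : (shiftFunctor C a).obj X ≅ (shiftFunctor C b).obj Y) :
    X ≅ (shiftFunctor C (b - a)).obj Y :=
  (shiftShiftNeg X a).symm ≪≫ (shiftFunctor C (-a)).mapIso e ≪≫
    shiftShiftIso Y b (-a) (b - a) (by ring)

lemma hom_zero_of_shift {B₁ B₂ : C} {a b : ℤ}
    (hz : ∀ g : B₁ ⟶ (shiftFunctor C (b - a)).obj B₂, g = 0)
    (u : (shiftFunctor C a).obj B₁ ⟶ (shiftFunctor C b).obj B₂) : u = 0 := by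
  apply (shiftFunctor C (-a)).map_injective
  rw [Functor.map_zero]
  set e := shiftShiftIso B₂ b (-a) (b - a) (by ring)
  have h0 : (shiftShiftNeg B₁ a).inv ≫ (shiftFunctor C (-a)).map u ≫ e.hom = 0 := hz _
  have h2 : (shiftFunctor C (-a)).map u =
      (shiftShiftNeg B₁ a).hom ≫ ((shiftShiftNeg B₁ a).inv ≫ (shiftFunctor C (-a)).map u ≫ e.hom)
        ≫ e.inv := by simp only [Category.assoc, Iso.hom_inv_id, Iso.hom_inv_id_assoc, Category.comp_id]
  rw [h2, h0, zero_comp, comp_zero]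

lemma hom_zero_of_iso_shift {E F B₁ B₂ : C} {a b : ℤ}
    (e₁ : E ≅ (shiftFunctor C a).obj B₁) (e₂ : F ≅ (shiftFunctor C b).obj B₂)
    (hz : ∀ g : B₁ ⟶ (shiftFunctor C (b - a)).obj B₂, g = 0) (f : E ⟶ F) : f = 0 := by
  have h0 : e₁.inv ≫ f ≫ e₂.hom = 0 := hom_zero_of_shift hz _
  have h2 : f = e₁.hom ≫ (e₁.inv ≫ f ≫ e₂.hom) ≫ e₂.inv := by simp
  rw [h2, h0, zero_comp, comp_zero]

lemma contract_filtration (P : ℝ → Set C) :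
    ∀ (n : ℕ) (obj : Fin (n + 1) → C) (φ : Fin n → ℝ), StrictAnti φ →
    (∀ i : Fin n, ∃ (A : C) (f : obj i.castSucc ⟶ obj i.succ) (g : obj i.succ ⟶ A)
      (h : A ⟶ (obj i.castSucc)⟦(1 : ℤ)⟧),
      (Triangle.mk f g h ∈ distTriang C) ∧ A ∈ P (φ i)) →
    ∃ (n' : ℕ) (obj' : Fin (n' + 1) → C) (φ' : Fin n' → ℝ),
      Nonempty (obj' 0 ≅ obj 0) ∧ Nonempty (obj' (Fin.last n') ≅ obj (Fin.last n)) ∧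
      StrictAnti φ' ∧ (∀ j : Fin n', ∃ i : Fin n, φ' j = φ i) ∧
      ∀ i : Fin n', ∃ (A : C) (f : obj' i.castSucc ⟶ obj' i.succ) (g : obj' i.succ ⟶ A)
        (h : A ⟶ (obj' i.castSucc)⟦(1 : ℤ)⟧),
        (Triangle.mk f g h ∈ distTriang C) ∧ A ∈ P (φ' i) ∧ ¬ IsZero A := by
  intro n
  induction n with
  | zero =>
    intro obj φ _ _
    refine ⟨0, obj, φ, ⟨Iso.refl _⟩, ⟨Iso.refl _⟩, ?_, fun j => j.elim0, fun i => i.elim0⟩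
    intro a b hab
    exact a.elim0
  | succ n IH =>
    intro obj φ hφ htri
    obtain ⟨A, f, g, h, hdist, hAP⟩ := htri (Fin.last n)
    have key : ∀ i : Fin n, ∃ (A : C)
        (f : obj (i.castSucc.castSucc) ⟶ obj (i.succ.castSucc)) (g : obj (i.succ.castSucc) ⟶ A)
        (h : A ⟶ (obj (i.castSucc.castSucc))⟦(1 : ℤ)⟧),
        (Triangle.mk f g h ∈ distTriang C) ∧ A ∈ P (φ i.castSucc) := fun i => htri i.castSucc
    obtain ⟨n', obj', φ', ⟨e0⟩, ⟨elast⟩, hφ', hsub, htri'⟩ :=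
      IH (fun j => obj j.castSucc) (fun i => φ i.castSucc)
        (fun a b hab => hφ (Fin.castSucc_lt_castSucc_iff.mpr hab)) key
    by_cases hA : IsZero A
    · have hiso : IsIso f := (Triangle.isZero₃_iff_isIso₁ _ hdist).1 hA
      refine ⟨n', obj', φ', ⟨e0⟩, ⟨elast ≪≫ asIso f⟩, hφ', ?_, htri'⟩
      intro j; obtain ⟨i, hi⟩ := hsub j; exact ⟨i.castSucc, hi⟩
    · have hlt : ∀ j : Fin n', φ (Fin.last n) < φ' j := by
        intro j; obtain ⟨i, hi⟩ := hsub j; rw [hi]; exact hφ (Fin.castSucc_lt_last i)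
      refine ⟨n' + 1, Fin.snoc obj' (obj (Fin.last (n + 1))), Fin.snoc φ' (φ (Fin.last n)),
        ?_, ?_, ?_, ?_, ?_⟩
      · have h0 : (Fin.snoc obj' (obj (Fin.last (n + 1))) : Fin (n' + 2) → C) 0 = obj' 0 := by
          rw [show (0 : Fin (n' + 2)) = Fin.castSucc 0 from (Fin.castSucc_zero).symm]
          exact Fin.snoc_castSucc _ _ _
        rw [h0]; exact ⟨e0 ≪≫ eqToIso (congrArg obj Fin.castSucc_zero)⟩
      · rw [Fin.snoc_last]; exact ⟨Iso.refl _⟩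
      · intro a b hab
        rcases Fin.eq_castSucc_or_eq_last b with ⟨b', rfl⟩ | rfl
        · rcases Fin.eq_castSucc_or_eq_last a with ⟨a', rfl⟩ | rfl
          · rw [Fin.snoc_castSucc, Fin.snoc_castSucc]
            exact hφ' (Fin.castSucc_lt_castSucc_iff.mp hab)
          · exact absurd (hab.trans (Fin.castSucc_lt_last b')) (lt_irrefl _)
        · rcases Fin.eq_castSucc_or_eq_last a with ⟨a', rfl⟩ | rfl
          · rw [Fin.snoc_castSucc, Fin.snoc_last]; exact hlt a'
          · exact absurd hab (lt_irrefl _)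
      · intro j
        rcases Fin.eq_castSucc_or_eq_last j with ⟨j', rfl⟩ | rfl
        · obtain ⟨i, hi⟩ := hsub j'
          exact ⟨i.castSucc, by rw [Fin.snoc_castSucc]; exact hi⟩
        · exact ⟨Fin.last n, by rw [Fin.snoc_last]⟩
      · intro i
        rcases Fin.eq_castSucc_or_eq_last i with ⟨j, rfl⟩ | rfl
        · obtain ⟨A', f', g', h', hd, hP, hz⟩ := htri' j
          have e1 : (Fin.snoc obj' (obj (Fin.last (n + 1))) : Fin (n' + 2) → C)
              (j.castSucc.castSucc) = obj' j.castSucc := by simp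
          have e2 : (Fin.snoc obj' (obj (Fin.last (n + 1))) : Fin (n' + 2) → C)
              (j.castSucc.succ) = obj' j.succ := by
            rw [Fin.succ_castSucc]; exact Fin.snoc_castSucc _ _ _
          have e3 : (Fin.snoc φ' (φ (Fin.last n)) : Fin (n' + 1) → ℝ) j.castSucc = φ' j := by simp
          rw [e1, e2, e3]
          exact ⟨A', f', g', h', hd, hP, hz⟩
        · have e1 : (Fin.snoc obj' (obj (Fin.last (n + 1))) : Fin (n' + 2) → C)
              ((Fin.last n').castSucc) = obj' (Fin.last n') := by simp
          have e2 : (Fin.snoc obj' (obj (Fin.last (n + 1))) : Fin (n' + 2) → C)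
              ((Fin.last n').succ) = obj (Fin.last (n + 1)) := by
            rw [Fin.succ_last]; simp
          have e3 : (Fin.snoc φ' (φ (Fin.last n)) : Fin (n' + 1) → ℝ) (Fin.last n')
              = φ (Fin.last n) := by simp
          rw [e1, e2, e3]
          refine ⟨A, elast.hom ≫ f, g, h ≫ (shiftFunctor C (1 : ℤ)).map elast.inv, ?_, hAP, hA⟩
          refine isomorphic_distinguished _ hdist _ ?_
          refine Triangle.isoMk _ _ elast (Iso.refl _) (Iso.refl _) ?_ ?_ ?_
          · exact Category.comp_id _
          · exact (Category.comp_id _).trans (Category.id_comp _).symm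
          · exact (by rw [Category.assoc, ← Functor.map_comp, Iso.inv_hom_id, CategoryTheory.Functor.map_id,
                Category.comp_id, Category.id_comp] : (h ≫ (shiftFunctor C (1 : ℤ)).map elast.inv) ≫
                (shiftFunctor C (1 : ℤ)).map elast.hom = 𝟙 _ ≫ h)

noncomputable def mapBiprodIso (F : C ⥤ C) [F.Additive] (X Y : C) :
    F.obj (X ⊞ Y) ≅ F.obj X ⊞ F.obj Y where
  hom := biprod.lift (F.map biprod.fst) (F.map biprod.snd)
  inv := biprod.desc (F.map biprod.inl) (F.map biprod.inr)
  hom_inv_id := by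
    rw [biprod.lift_desc, ← F.map_comp, ← F.map_comp, ← F.map_add, biprod.total, F.map_id]
  inv_hom_id := by
    ext <;> simp [← F.map_comp]

lemma shift_degree_unique (H : Set C) (hheart : IsBoundedHeart (C := C) H) {B B' : C} {a b : ℤ}
    (hB : B ∈ H) (hB' : B' ∈ H) (hBz : ¬ IsZero B)
    (e : (shiftFunctor C a).obj B ≅ (shiftFunctor C b).obj B') : a = b := by
  by_contra hab
  exact hBz (hheart.disjoint_shift B hB B' hB' (b - a) (by omega) (shiftCancelIso a b e))

lemma StabilityCondition.isSemistable_of_isIndec (σ : StabilityCondition C)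
    (hvan : ∀ φ₁ φ₂ : ℝ, φ₁ + 1 < φ₂ → ∀ {E F : C}, E ∈ σ.P φ₁ → F ∈ σ.P φ₂ →
      ∀ f : E ⟶ F, f = 0)
    {E : C} (hE : IsIndec E) : σ.IsSemistable E := by
  obtain ⟨hEz, hind⟩ := hE
  obtain ⟨n, obj, φ, h0, ⟨elast⟩, hφ, htri⟩ := σ.HN E hEz
  cases n with
  | zero =>
    refine absurd (h0.of_iso (elast.symm ≪≫ eqToIso (congrArg obj ?_))) hEz
    exact Fin.ext rfl
  | succ m =>
    obtain ⟨A, f, g, h, hdist, hAP, hAz⟩ := htri (Fin.last m)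
    have claim : ∀ j : Fin (m + 2), (j : ℕ) ≤ m → ∀ u : A ⟶ (obj j)⟦(1 : ℤ)⟧, u = 0 := by
      intro j
      induction j using Fin.induction with
      | zero =>
        intro _ u
        exact ((isZero_shift_iff (obj 0) 1).mpr h0).eq_of_tgt _ _
      | succ i IHi =>
        intro hle u
        have hle' : (i : ℕ) + 1 ≤ m := by simpa using hle
        obtain ⟨A', f', g', h', hd', hP', hz'⟩ := htri i
        have hd'' := Pretriangulated.Triangle.shift_distinguished _ hd' 1
        have hu2 : u ≫ ((Triangle.shiftFunctor C 1).obj (Triangle.mk f' g' h')).mor₂ = 0 := by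
          refine hvan (φ (Fin.last m)) (φ i + 1) ?_ hAP ((σ.shift_mem _ _).mp hP') _
          have hlt : φ (Fin.last m) < φ i := by
            refine hφ ?_
            rw [Fin.lt_def, Fin.val_last]
            omega
          linarith
        obtain ⟨v, hv⟩ := Triangle.coyoneda_exact₂ _ hd'' u hu2
        have hv0 : v = 0 := IHi (by simpa using Nat.le_of_succ_le hle') v
        rw [hv, hv0, zero_comp]
        rfl
    have hh : h = 0 := claim ((Fin.last m).castSucc) (by simp) h
    obtain ⟨e, -, -⟩ := exists_iso_binaryBiproduct_of_distTriang _ hdist hh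
    have eE : E ≅ obj ((Fin.last m).castSucc) ⊞ A := elast.symm ≪≫ e
    rcases hind _ _ eE with hL | hR
    · exact ⟨φ (Fin.last m), σ.mem_of_iso (eE ≪≫ biprodIsoOfIsZeroLeft hL).symm hAP⟩
    · exact absurd hR hAz

open Classical in
noncomputable def heartStab (H : Set C) (hheart : IsBoundedHeart (C := C) H) :
    StabilityCondition C where
  Z E := if h : ∃ n : ℤ, ∃ B ∈ H, ¬ IsZero B ∧ Nonempty (E ≅ B⟦n⟧) then
      Complex.exp (Real.pi * (h.choose : ℂ) * Complex.I) else 0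
  P φ := {E | IsZero E ∨ ∃ n : ℤ, φ = (n : ℝ) ∧ ∃ B ∈ H, Nonempty (E ≅ B⟦n⟧)}
  mem_of_iso := by
    rintro φ E F e (hz | ⟨n, hn, B, hB, ⟨eB⟩⟩)
    · exact Or.inl (hz.of_iso e.symm)
    · exact Or.inr ⟨n, hn, B, hB, ⟨e.symm ≪≫ eB⟩⟩
  charge := by
    rintro φ E (hz | ⟨n, hn, B, hB, ⟨eB⟩⟩) hEz
    · exact absurd hz hEz
    · have hBz : ¬ IsZero B := fun hz => hEz (((isZero_shift_iff B n).mpr hz).of_iso eB)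
      have hex : ∃ n' : ℤ, ∃ B' ∈ H, ¬ IsZero B' ∧ Nonempty (E ≅ B'⟦n'⟧) := ⟨n, B, hB, hBz, ⟨eB⟩⟩
      obtain ⟨B', hB', hB'z, ⟨eB'⟩⟩ := hex.choose_spec
      have hnn : hex.choose = n :=
        shift_degree_unique H hheart hB' hB hB'z (eB'.symm ≪≫ eB)
      refine ⟨1, one_pos, ?_⟩
      rw [dif_pos hex, hnn, hn]
      push_cast
      rw [one_mul]
  shift_mem := by
    intro φ E
    constructor
    · rintro (hz | ⟨n, hn, B, hB, ⟨eB⟩⟩)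
      · exact Or.inl ((isZero_shift_iff E 1).mpr hz)
      · refine Or.inr ⟨n + 1, by rw [hn]; push_cast; ring, B, hB,
          ⟨(shiftFunctor C (1 : ℤ)).mapIso eB ≪≫ shiftShiftIso B n 1 (n + 1) rfl⟩⟩
    · rintro (hz | ⟨n, hn, B, hB, ⟨eB⟩⟩)
      · exact Or.inl ((isZero_shift_iff E 1).mp hz)
      · refine Or.inr ⟨n - 1, ?_, B, hB, ⟨shiftCancelIso 1 n eB⟩⟩
        have := hn
        push_cast at this ⊢
        linarith
  sum_mem := by
    rintro φ X Y (hzX | ⟨n, hn, B, hB, ⟨eB⟩⟩) hY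
    · rcases hY with hzY | ⟨n, hn, B, hB, ⟨eB⟩⟩
      · exact Or.inl (hzY.of_iso (biprodIsoOfIsZeroLeft hzX))
      · exact Or.inr ⟨n, hn, B, hB, ⟨biprodIsoOfIsZeroLeft hzX ≪≫ eB⟩⟩
    · rcases hY with hzY | ⟨n', hn', B', hB', ⟨eB'⟩⟩
      · exact Or.inr ⟨n, hn, B, hB, ⟨biprodIsoOfIsZeroRight hzY ≪≫ eB⟩⟩
      · have hnn : n' = n := by
          have : (n : ℝ) = (n' : ℝ) := by rw [← hn, ← hn']
          exact_mod_cast this.symm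
        subst hnn
        exact Or.inr ⟨n', hn, B ⊞ B', hheart.sum_mem hB hB',
          ⟨biprod.mapIso eB eB' ≪≫ (mapBiprodIso (shiftFunctor C n') B B').symm⟩⟩
  summand_mem := by
    rintro φ X Y (hz | ⟨n, hn, D, hD, ⟨e⟩⟩)
    · refine Or.inl ?_
      rw [IsZero.iff_id_eq_zero]
      have h1 : (𝟙 X : X ⟶ X) = (biprod.inl : X ⟶ X ⊞ Y) ≫ biprod.fst := by simp
      rw [h1, hz.eq_of_tgt biprod.inl 0, zero_comp]
    · have hmem : ((shiftFunctor C (-n)).obj X ⊞ (shiftFunctor C (-n)).obj Y) ∈ H := by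
        refine hheart.mem_of_iso ?_ hD
        exact (shiftShiftNeg D n).symm ≪≫ (shiftFunctor C (-n)).mapIso e.symm ≪≫
          mapBiprodIso (shiftFunctor C (-n)) X Y
      exact Or.inr ⟨n, hn, (shiftFunctor C (-n)).obj X, hheart.summand_mem hmem,
        ⟨(shiftNegShift X n).symm⟩⟩
  hom_zero := by
    rintro φ₁ φ₂ hlt E F (hzE | ⟨n₁, hn₁, B₁, hB₁, ⟨e₁⟩⟩) hF f
    · exact hzE.eq_of_src f 0
    · rcases hF with hzF | ⟨n₂, hn₂, B₂, hB₂, ⟨e₂⟩⟩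
      · exact hzF.eq_of_tgt f 0
      · refine hom_zero_of_iso_shift e₁ e₂ ?_ f
        intro g
        refine hheart.neg_ext B₁ hB₁ B₂ hB₂ (n₂ - n₁) ?_ g
        have h1 : (n₂ : ℝ) < (n₁ : ℝ) := by rw [← hn₁, ← hn₂]; exact hlt
        have h2 : n₂ < n₁ := by exact_mod_cast h1
        omega
  HN := by
    intro E hEz
    obtain ⟨n, obj, m, h0, ⟨elast⟩, hm, htri⟩ := hheart.bounded E hEz
    have hcast : StrictAnti (fun i : Fin n => ((m i : ℤ) : ℝ)) := fun a b hab =>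
      Int.cast_lt.mpr (hm hab)
    have htri' : ∀ i : Fin n, ∃ (A : C) (f : obj i.castSucc ⟶ obj i.succ) (g : obj i.succ ⟶ A)
        (w : A ⟶ (obj i.castSucc)⟦(1 : ℤ)⟧), (Triangle.mk f g w ∈ distTriang C) ∧
        A ∈ {E | IsZero E ∨ ∃ k : ℤ, ((m i : ℤ) : ℝ) = (k : ℝ) ∧ ∃ B ∈ H, Nonempty (E ≅ B⟦k⟧)} := by
      intro i
      obtain ⟨A, f, g, w, hd, B, hB, hiso⟩ := htri i
      exact ⟨A, f, g, w, hd, Or.inr ⟨m i, rfl, B, hB, hiso⟩⟩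
    obtain ⟨n', obj', φ', ⟨e0⟩, ⟨elast'⟩, hφ', -, htri''⟩ :=
      contract_filtration
        (fun φ => {E | IsZero E ∨ ∃ k : ℤ, φ = (k : ℝ) ∧ ∃ B ∈ H, Nonempty (E ≅ B⟦k⟧)})
        n obj (fun i => ((m i : ℤ) : ℝ)) hcast htri'
    exact ⟨n', obj', φ', h0.of_iso e0, ⟨elast' ≪≫ elast⟩, hφ', htri''⟩

theorem gldim_min_eq_one_of_nonDynkin (H : Set C)
    (hheart : IsBoundedHeart (C := C) H)
    (hhered : IsHereditary (C := C) H)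
    (hfin : HasFinitelyManySimples (C := C) H)
    (hselfext : ∃ E : C, IsIndec E ∧ ∃ f : E ⟶ E⟦(1 : ℤ)⟧, f ≠ 0) :
    (∀ σ : StabilityCondition C, (1 : EReal) ≤ σ.gldim) ∧
      ∃ σ : StabilityCondition C, σ.gldim = 1 := by
  have main : ∀ σ : StabilityCondition C,
      (∀ φ₁ φ₂ : ℝ, φ₁ + 1 < φ₂ → ∀ {E F : C}, E ∈ σ.P φ₁ → F ∈ σ.P φ₂ → ∀ f : E ⟶ F, f = 0) →
      (1 : EReal) ≤ σ.gldim := by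
    intro σ hvan
    obtain ⟨E, hEind, f, hf⟩ := hselfext
    obtain ⟨φ, hφ⟩ := σ.isSemistable_of_isIndec hvan hEind
    have h1 : ((φ + 1 - φ : ℝ) : EReal) ≤ σ.gldim :=
      le_sSup ⟨φ, φ + 1, E, E⟦(1 : ℤ)⟧, f, hφ, (σ.shift_mem φ E).mp hφ, hf, rfl⟩
    have h2 : ((φ + 1 - φ : ℝ) : EReal) = ((1 : ℝ) : EReal) := by norm_num
    rw [h2, EReal.coe_one] at h1
    exact h1
  constructor
  · intro σ
    by_contra hc
    have hlt : σ.gldim < 1 := lt_of_not_ge hc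
    refine hc (main σ ?_)
    intro φ₁ φ₂ hφ E F hE hF f
    by_contra hfne
    have hmem : ((φ₂ - φ₁ : ℝ) : EReal) ≤ σ.gldim :=
      le_sSup ⟨φ₁, φ₂, E, F, f, hE, hF, hfne, rfl⟩
    have h3 : ((φ₂ - φ₁ : ℝ) : EReal) < ((1 : ℝ) : EReal) :=
      lt_of_le_of_lt hmem (by rw [EReal.coe_one]; exact hlt)
    rw [EReal.coe_lt_coe_iff] at h3
    linarith
  · refine ⟨heartStab H hheart, ?_⟩
    set σ := heartStab H hheart with hσdef
    have hP : ∀ (φ : ℝ) (E : C), E ∈ σ.P φ ↔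
        (IsZero E ∨ ∃ n : ℤ, φ = (n : ℝ) ∧ ∃ B ∈ H, Nonempty (E ≅ B⟦n⟧)) := by
      intro φ E
      rw [hσdef]
      rfl
    have hvan : ∀ φ₁ φ₂ : ℝ, φ₁ + 1 < φ₂ → ∀ {E F : C}, E ∈ σ.P φ₁ → F ∈ σ.P φ₂ →
        ∀ f : E ⟶ F, f = 0 := by
      intro φ₁ φ₂ hφ E F hE hF f
      rcases (hP _ _).mp hE with hzE | ⟨n₁, hn₁, B₁, hB₁, ⟨e₁⟩⟩
      · exact hzE.eq_of_src f 0
      rcases (hP _ _).mp hF with hzF | ⟨n₂, hn₂, B₂, hB₂, ⟨e₂⟩⟩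
      · exact hzF.eq_of_tgt f 0
      refine hom_zero_of_iso_shift e₁ e₂ (fun g => hhered B₁ hB₁ B₂ hB₂ (n₂ - n₁) ?_ g) f
      have h1 : (n₁ : ℝ) + 1 < (n₂ : ℝ) := by rw [← hn₁, ← hn₂]; exact hφ
      have h2 : n₁ + 1 < n₂ := by exact_mod_cast h1
      omega
    refine le_antisymm ?_ (main σ hvan)
    apply sSup_le
    rintro d ⟨φ₁, φ₂, E, F, f, hE, hF, hf, rfl⟩
    rcases (hP _ _).mp hE with hzE | ⟨n₁, hn₁, B₁, hB₁, ⟨e₁⟩⟩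
    · exact absurd (hzE.eq_of_src f 0) hf
    rcases (hP _ _).mp hF with hzF | ⟨n₂, hn₂, B₂, hB₂, ⟨e₂⟩⟩
    · exact absurd (hzF.eq_of_tgt f 0) hf
    have key : n₂ - n₁ ≤ 1 := by
      by_contra hk
      exact hf (hom_zero_of_iso_shift e₁ e₂
        (fun g => hhered B₁ hB₁ B₂ hB₂ (n₂ - n₁) (by omega) g) f)
    have hr : φ₂ - φ₁ ≤ 1 := by
      rw [hn₁, hn₂]
      have : ((n₂ - n₁ : ℤ) : ℝ) ≤ ((1 : ℤ) : ℝ) := by exact_mod_cast key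
      push_cast at this
      linarith
    calc ((φ₂ - φ₁ : ℝ) : EReal) ≤ ((1 : ℝ) : EReal) := EReal.coe_le_coe_iff.mpr hr
      _ = 1 := EReal.coe_one
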